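/- Let p/q and p'/q' be rationals (q, q' positive integers), ω = (α, α', 1) with α, α' irrational, and let a_q, b_{q'} be positive reals satisfying e^{−q} ≥ a_q ≥ 4|qα − p| and e^{−q'} ≥ b_{q'} ≥ 4|q'α' − p'|. Define H(θ,r) = ⟨r,ω⟩ − a_q cos 2π(qθ₁ − pθ₃) − b_{q'} cos 2π(q'θ₂ − p'θ₃). Then: (a) for each t ∈ [a_q^{−1}, 1/(4|qα − p|)], the time-t map Φ^t_H is (1, 1/q, 2q)-stretching; (b) for each t ∈ [b_{q'}^{−1}, 1/(4|q'α' − p'|)], the time-t map Φ^t_H is (2, 1/q', 2q')-stretching. -/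

import Mathlib

/-!
STATEMENT 8 (Lemma 2 of the paper):
Let p/q, p'/q' be rationals, ω = (α, α', 1) with α, α' irrational, and a_q,
b_{q'} positive reals with e^{−q} ≥ a_q ≥ 4|qα − p| and e^{−q'} ≥ b_{q'} ≥ 4|q'α' − p'|.
For H(θ,r) = ⟨r,ω⟩ − a_q cos 2π(qθ₁ − pθ₃) − b_{q'} cos 2π(q'θ₂ − p'θ₃):
(a) for each t ∈ [a_q⁻¹, 1/(4|qα − p|)], Φ^t_H is (1, 1/q, 2q)-stretching;
(b) for each t ∈ [b_{q'}⁻¹, 1/(4|q'α' − p'|)], Φ^t_H is (2, 1/q', 2q')-stretching.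

We work on the universal cover ℝ³ × ℝ³.
-/

open Real Set

noncomputable section

/-- Phase space (the universal cover of 𝕋³ × ℝ³). -/
abbrev PS3 : Type := (Fin 3 → ℝ) × (Fin 3 → ℝ)

/-- `Φ` is the flow of the Hamiltonian ODE θ̇ = ∂H/∂r, ṙ = −∂H/∂θ. -/
def IsHamFlow (H : PS3 → ℝ) (Φ : ℝ → PS3 → PS3) : Prop :=
  (∀ x, Φ 0 x = x) ∧
  (∀ (x : PS3) (t : ℝ) (j : Fin 3),
    HasDerivAt (fun s : ℝ => (Φ s x).1 j)
      (deriv (fun y : ℝ => H ((Φ t x).1, Function.update (Φ t x).2 j y)) ((Φ t x).2 j)) t) ∧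
  (∀ (x : PS3) (t : ℝ) (j : Fin 3),
    HasDerivAt (fun s : ℝ => (Φ s x).2 j)
      (-deriv (fun y : ℝ => H (Function.update (Φ t x).1 j y, (Φ t x).2)) ((Φ t x).1 j)) t)

/-- The interval J⁽¹⁾(s₀, l) in the energy surface {H = H(s₀)}. -/
def J1 (H : PS3 → ℝ) (s₀ : PS3) (l : ℝ) : Set PS3 :=
  {x | (∃ s ∈ Icc (0 : ℝ) l, x.1 0 = s₀.1 0 + s) ∧ x.1 1 = s₀.1 1 ∧ x.1 2 = s₀.1 2 ∧
       x.2 0 = s₀.2 0 ∧ x.2 1 = s₀.2 1 ∧ H x = H s₀}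

/-- The interval J⁽²⁾(s₀, l) in the energy surface {H = H(s₀)}. -/
def J2 (H : PS3 → ℝ) (s₀ : PS3) (l : ℝ) : Set PS3 :=
  {x | x.1 0 = s₀.1 0 ∧ (∃ s ∈ Icc (0 : ℝ) l, x.1 1 = s₀.1 1 + s) ∧ x.1 2 = s₀.1 2 ∧
       x.2 0 = s₀.2 0 ∧ x.2 1 = s₀.2 1 ∧ H x = H s₀}

/-- Φ^t is (1, l, L)-stretching. -/
def Stretching1 (H : PS3 → ℝ) (Φ : ℝ → PS3 → PS3) (t l L : ℝ) : Prop :=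
  (∀ s₀ : PS3, ‖s₀.2‖ ≤ L / 10 →
    Icc (-L) L ⊆ (fun x => (Φ t x).2 0) '' J1 H s₀ l) ∧
  (∀ x y : PS3, x.1 0 = y.1 0 → x.1 2 = y.1 2 → x.2 = y.2 →
    (Φ t x).2 0 = (Φ t y).2 0)

/-- Φ^t is (2, l, L)-stretching. -/
def Stretching2 (H : PS3 → ℝ) (Φ : ℝ → PS3 → PS3) (t l L : ℝ) : Prop :=
  (∀ s₀ : PS3, ‖s₀.2‖ ≤ L / 10 →
    Icc (-L) L ⊆ (fun x => (Φ t x).2 1) '' J2 H s₀ l) ∧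
  (∀ x y : PS3, x.1 1 = y.1 1 → x.1 2 = y.1 2 → x.2 = y.2 →
    (Φ t x).2 1 = (Φ t y).2 1)


lemma sin_quarter (k : ℤ) : Real.sin (π/2 - 2*π*k) = 1 := by
  rw [Real.sin_sub, Real.sin_pi_div_two, Real.cos_pi_div_two]
  have h1 : Real.cos (2*π*k) = 1 := by
    have := Real.cos_int_mul_two_pi k; rw [show (k:ℝ) * (2*π) = 2*π*k by ring] at this
    exact this
  rw [h1]; ring

lemma sin_three_quarter (k : ℤ) : Real.sin (π/2 + π - 2*π*k) = -1 := by
  rw [show π/2 + π - 2*π*k = (π/2 - 2*π*k) + π by ring, Real.sin_add_pi, sin_quarter]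

lemma stretch_aux (ε aa : ℝ) (Q : ℕ) (hQ : 0 < Q) (hε : ε ≠ 0) (ha : 4*|ε| ≤ aa)
    (t : ℝ) (ht : t ∈ Icc aa⁻¹ (1/(4*|ε|))) (r₀ c₀ y : ℝ)
    (hr : |r₀| ≤ 2*Q/10) (hy : |y| ≤ 2*Q) :
    ∃ s ∈ Icc (0:ℝ) (1/Q), r₀ + ((Q:ℝ)*aa/ε) *
      (Real.cos (2*π*((c₀+Q*s) + ε*t)) - Real.cos (2*π*(c₀+Q*s))) = y := by
  set E := |ε| with hE
  have hεpos : 0 < E := abs_pos.mpr hε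
  have haa : 0 < aa := lt_of_lt_of_le (by positivity) ha
  have htpos : 0 < t := lt_of_lt_of_le (by positivity) ht.1
  have hat : 1 ≤ aa * t := by
    have := mul_le_mul_of_nonneg_left ht.1 haa.le
    rwa [mul_inv_cancel₀ haa.ne'] at this
  have hεt : E * t ≤ 1/4 := by
    have := mul_le_mul_of_nonneg_left ht.2 hεpos.le
    rwa [show E * (1/(4*E)) = 1/4 by field_simp] at this
  have hπ := Real.pi_pos
  set A : ℝ := 2*Q*aa/ε * Real.sin (π*ε*t) with hA
  set g : ℝ → ℝ := fun s => r₀ - A * Real.sin (2*π*(c₀+Q*s) + π*ε*t) with hg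
  have hgf : ∀ s : ℝ, r₀ + ((Q:ℝ)*aa/ε) *
      (Real.cos (2*π*((c₀+Q*s) + ε*t)) - Real.cos (2*π*(c₀+Q*s))) = g s := by
    intro s
    have := Real.cos_sub_cos (2*π*((c₀+Q*s) + ε*t)) (2*π*(c₀+Q*s))
    rw [show (2*π*((c₀+Q*s) + ε*t) + 2*π*(c₀+Q*s))/2 = 2*π*(c₀+Q*s) + π*ε*t by ring,
      show (2*π*((c₀+Q*s) + ε*t) - 2*π*(c₀+Q*s))/2 = π*ε*t by ring] at this
    rw [this, hg, hA]; ring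
  -- bound on |A|
  have hsin : |Real.sin (π*ε*t)| = Real.sin (π*(E*t)) := by
    rcases abs_cases ε with ⟨h1, h2⟩ | ⟨h1, h2⟩
    · rw [show π*ε*t = π*(E*t) by rw [hE, h1]; ring]
      exact abs_of_nonneg (Real.sin_nonneg_of_nonneg_of_le_pi (by positivity)
        (by nlinarith))
    · rw [show π*ε*t = -(π*(E*t)) by rw [hE, h1]; ring, Real.sin_neg, abs_neg]
      exact abs_of_nonneg (Real.sin_nonneg_of_nonneg_of_le_pi (by positivity)
        (by nlinarith))
  have hsinb : 2*(E*t) ≤ Real.sin (π*(E*t)) := by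
    have := Real.mul_le_sin (x := π*(E*t)) (by positivity) (by nlinarith)
    calc 2*(E*t) = 2/π * (π*(E*t)) := by field_simp
    _ ≤ _ := this
  have hAbound : 2*Q + 2*Q/10 ≤ |A| := by
    have h0 : |A| = 2*Q*aa/E * |Real.sin (π*ε*t)| := by
      rw [hA, abs_mul, abs_div, hE]
      congr 1
      rw [abs_of_nonneg (by positivity : (0:ℝ) ≤ 2*(Q:ℝ)*aa)]
    rw [h0, hsin]
    have h1 : 2*Q*aa/E * (2*(E*t)) ≤ 2*Q*aa/E * Real.sin (π*(E*t)) :=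
      mul_le_mul_of_nonneg_left hsinb (by positivity)
    have h2 : 2*Q*aa/E * (2*(E*t)) = 4*Q*(aa*t) := by field_simp; ring
    have hQ1 : (1:ℝ) ≤ Q := by exact_mod_cast hQ
    nlinarith
  -- the two special points
  set uP : ℝ := 1/4 - c₀ - ε*t/2 with huP
  set uM : ℝ := 3/4 - c₀ - ε*t/2 with huM
  set sP : ℝ := Int.fract uP / Q with hsP
  set sM : ℝ := Int.fract uM / Q with hsM
  have hQR : (0:ℝ) < Q := by exact_mod_cast hQ
  have hmem : ∀ u : ℝ, Int.fract u / Q ∈ Icc (0:ℝ) (1/Q) := by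
    intro u
    refine ⟨div_nonneg (Int.fract_nonneg u) hQR.le, ?_⟩
    rw [div_le_div_iff_of_pos_right hQR]
    · exact (Int.fract_lt_one u).le
  have hvalP : g sP = r₀ - A := by
    have hgp : g sP = r₀ - A * Real.sin (2*π*(c₀+Q*sP) + π*ε*t) := rfl
    rw [hgp]
    have harg : 2*π*(c₀+Q*sP) + π*ε*t = π/2 - 2*π*(⌊uP⌋ : ℤ) := by
      rw [hsP, mul_div_cancel₀ _ (ne_of_gt hQR), Int.fract, huP]; ring
    rw [harg, sin_quarter]; ring
  have hvalM : g sM = r₀ + A := by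
    have hgp : g sM = r₀ - A * Real.sin (2*π*(c₀+Q*sM) + π*ε*t) := rfl
    rw [hgp]
    have harg : 2*π*(c₀+Q*sM) + π*ε*t = π/2 + π - 2*π*(⌊uM⌋ : ℤ) := by
      rw [hsM, mul_div_cancel₀ _ (ne_of_gt hQR), Int.fract, huM]; ring
    rw [harg, sin_three_quarter]; ring
  -- IVT
  have hcont : Continuous g := by
    rw [hg]; fun_prop
  have hy' : y ∈ uIcc (g sP) (g sM) := by
    rw [hvalP, hvalM, Set.mem_uIcc]
    rcases abs_le.mp hy with ⟨hy1, hy2⟩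
    rcases abs_le.mp hr with ⟨hr1, hr2⟩
    rcases abs_cases A with ⟨h1, h2⟩ | ⟨h1, h2⟩
    · left; constructor <;> linarith
    · right; constructor <;> linarith
  obtain ⟨s, hsmem, hgs⟩ := intermediate_value_uIcc (hcont.continuousOn (s := uIcc sP sM)) hy'
  refine ⟨s, ?_, by rw [hgf s, hgs]⟩
  exact Set.uIcc_subset_Icc (hmem uP) (hmem uM) hsmem

lemma eq_of_hasDerivAt_eq {f g : ℝ → ℝ} {d : ℝ → ℝ}
    (hf : ∀ u, HasDerivAt f (d u) u) (hg : ∀ u, HasDerivAt g (d u) u)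
    (h0 : f 0 = g 0) (t : ℝ) : f t = g t := by
  have h2 : ∀ u, HasDerivAt (fun s => f s - g s) 0 u := fun u => by
    have h := (hf u).sub (hg u); rw [sub_self] at h; exact h
  have := is_const_of_deriv_eq_zero (f := fun s => f s - g s)
    (fun u => (h2 u).differentiableAt) (fun u => (h2 u).deriv) t 0
  linarith [this]

lemma linear_of_deriv_const {f : ℝ → ℝ} {c : ℝ} (h : ∀ u, HasDerivAt f c u) (t : ℝ) :
    f t = f 0 + t * c := by
  have := eq_of_hasDerivAt_eq (d := fun _ => c) (g := fun u => f 0 + u * c) h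
    (fun u => by simpa using ((hasDerivAt_id u).mul_const c).const_add (f 0)) (by simp) t
  simpa using this

section Helpers
variable (α α' : ℝ) (p p' : ℤ) (q q' : ℕ) (a b : ℝ)
    (H : PS3 → ℝ)
    (hH : H = fun x : PS3 =>
      (∑ j, x.2 j * (![α, α', 1] : Fin 3 → ℝ) j)
        - a * Real.cos (2 * π * ((q : ℝ) * x.1 0 - (p : ℝ) * x.1 2))
        - b * Real.cos (2 * π * ((q' : ℝ) * x.1 1 - (p' : ℝ) * x.1 2)))
    (Φ : ℝ → PS3 → PS3) (hΦ : IsHamFlow H Φ)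

include hH in
lemma keyR : ∀ (θ r : Fin 3 → ℝ) (j : Fin 3) (z : ℝ),
    deriv (fun y : ℝ => H (θ, Function.update r j y)) z = ![α, α', 1] j := by
  intro θ r j z
  have hfun : (fun y : ℝ => H (θ, Function.update r j y)) = fun y =>
      y * ![α, α', 1] j + ((∑ k, r k * ![α, α', 1] k) - r j * ![α, α', 1] j
        - a * Real.cos (2 * π * ((q : ℝ) * θ 0 - (p : ℝ) * θ 2))
        - b * Real.cos (2 * π * ((q' : ℝ) * θ 1 - (p' : ℝ) * θ 2))) := by
    funext y
    fin_cases j <;> simp [hH, Fin.sum_univ_three, Function.update] <;> ring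
  rw [hfun]
  have hd : HasDerivAt (fun y : ℝ => y * ![α, α', 1] j + ((∑ k, r k * ![α, α', 1] k) - r j * ![α, α', 1] j
        - a * Real.cos (2 * π * ((q : ℝ) * θ 0 - (p : ℝ) * θ 2))
        - b * Real.cos (2 * π * ((q' : ℝ) * θ 1 - (p' : ℝ) * θ 2)))) (![α, α', 1] j) z := by
    simpa using ((hasDerivAt_id z).mul_const (![α, α', 1] j)).add_const ((∑ k, r k * ![α, α', 1] k) - r j * ![α, α', 1] j
        - a * Real.cos (2 * π * ((q : ℝ) * θ 0 - (p : ℝ) * θ 2))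
        - b * Real.cos (2 * π * ((q' : ℝ) * θ 1 - (p' : ℝ) * θ 2)))
  rw [hd.deriv]

include hH in
lemma keyT0 : ∀ (θ r : Fin 3 → ℝ),
    deriv (fun y : ℝ => H (Function.update θ 0 y, r)) (θ 0)
      = a * Real.sin (2 * π * ((q : ℝ) * θ 0 - (p : ℝ) * θ 2)) * (2 * π * q) := by
  intro θ r
  have hfun : (fun y : ℝ => H (Function.update θ 0 y, r)) = fun y =>
      (∑ k, r k * ![α, α', 1] k)
        - a * Real.cos (2 * π * ((q : ℝ) * y - (p : ℝ) * θ 2))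
        - b * Real.cos (2 * π * ((q' : ℝ) * θ 1 - (p' : ℝ) * θ 2)) := by
    funext y
    simp [hH, Fin.sum_univ_three, Function.update]
  rw [hfun]
  have hinner : HasDerivAt (fun y : ℝ => 2 * π * ((q : ℝ) * y - (p : ℝ) * θ 2))
      (2 * π * q) (θ 0) := by
    simpa using (((hasDerivAt_id (θ 0)).const_mul (q : ℝ)).sub_const ((p : ℝ) * θ 2)).const_mul (2 * π)
  have h := (((hinner.cos).const_mul a).const_sub (∑ k, r k * ![α, α', 1] k)).sub_const
    (b * Real.cos (2 * π * ((q' : ℝ) * θ 1 - (p' : ℝ) * θ 2)))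
  rw [h.deriv]
  ring

include hH in
lemma keyT1 : ∀ (θ r : Fin 3 → ℝ),
    deriv (fun y : ℝ => H (Function.update θ 1 y, r)) (θ 1)
      = b * Real.sin (2 * π * ((q' : ℝ) * θ 1 - (p' : ℝ) * θ 2)) * (2 * π * q') := by
  intro θ r
  have hfun : (fun y : ℝ => H (Function.update θ 1 y, r)) = fun y =>
      (∑ k, r k * ![α, α', 1] k)
        - a * Real.cos (2 * π * ((q : ℝ) * θ 0 - (p : ℝ) * θ 2))
        - b * Real.cos (2 * π * ((q' : ℝ) * y - (p' : ℝ) * θ 2)) := by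
    funext y
    simp [hH, Fin.sum_univ_three, Function.update]
  rw [hfun]
  have hinner : HasDerivAt (fun y : ℝ => 2 * π * ((q' : ℝ) * y - (p' : ℝ) * θ 2))
      (2 * π * q') (θ 1) := by
    simpa using (((hasDerivAt_id (θ 1)).const_mul (q' : ℝ)).sub_const ((p' : ℝ) * θ 2)).const_mul (2 * π)
  have h := ((hinner.cos).const_mul b).const_sub
    ((∑ k, r k * ![α, α', 1] k) - a * Real.cos (2 * π * ((q : ℝ) * θ 0 - (p : ℝ) * θ 2)))
  have hfun2 : (fun y => (∑ k, r k * ![α, α', 1] k)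
        - a * Real.cos (2 * π * ((q : ℝ) * θ 0 - (p : ℝ) * θ 2))
        - b * Real.cos (2 * π * ((q' : ℝ) * y - (p' : ℝ) * θ 2)))
      = fun y => ((∑ k, r k * ![α, α', 1] k) - a * Real.cos (2 * π * ((q : ℝ) * θ 0 - (p : ℝ) * θ 2)))
        - b * Real.cos (2 * π * ((q' : ℝ) * y - (p' : ℝ) * θ 2)) := by
    funext y; ring
  rw [hfun2, h.deriv]
  ring

include hH hΦ in
lemma flowTheta : ∀ (x : PS3) (u : ℝ) (j : Fin 3), (Φ u x).1 j = x.1 j + u * ![α, α', 1] j := by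
  intro x u j
  have hder : ∀ v : ℝ, HasDerivAt (fun s => (Φ s x).1 j) (![α, α', 1] j) v := by
    intro v
    have h := hΦ.2.1 x v j
    rwa [keyR α α' p p' q q' a b H hH] at h
  rw [linear_of_deriv_const hder u, hΦ.1 x]

include hH hΦ in
lemma flowR0 : ∀ (x : PS3) (t : ℝ), ((q : ℝ) * α - (p : ℝ)) ≠ 0 → (Φ t x).2 0
    = x.2 0 + ((q : ℝ) * a / ((q : ℝ) * α - (p : ℝ))) *
      (Real.cos (2 * π * ((((q : ℝ) * x.1 0 - (p : ℝ) * x.1 2)) + ((q : ℝ) * α - (p : ℝ)) * t))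
        - Real.cos (2 * π * ((q : ℝ) * x.1 0 - (p : ℝ) * x.1 2))) := by
  intro x t hε
  set ε := (q : ℝ) * α - (p : ℝ) with hεdef
  set c := (q : ℝ) * x.1 0 - (p : ℝ) * x.1 2 with hcdef
  have hf : ∀ u : ℝ, HasDerivAt (fun s => (Φ s x).2 0)
      (-(2 * π * q * a) * Real.sin (2 * π * (c + ε * u))) u := by
    intro u
    have h := hΦ.2.2 x u 0
    rw [keyT0 α α' p p' q q' a b H hH] at h
    have e1 : (Φ u x).1 0 = x.1 0 + u * α := by
      have := flowTheta α α' p p' q q' a b H hH Φ hΦ x u 0; simpa using this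
    have e2 : (Φ u x).1 2 = x.1 2 + u := by
      have := flowTheta α α' p p' q q' a b H hH Φ hΦ x u 2; simpa using this
    rw [e1, e2] at h
    convert h using 1
    rw [show 2 * π * ((q : ℝ) * (x.1 0 + u * α) - (p : ℝ) * (x.1 2 + u)) = 2 * π * (c + ε * u) by
      rw [hcdef, hεdef]; ring]
    ring
  have hF : ∀ u : ℝ, HasDerivAt
      (fun u : ℝ => x.2 0 + ((q : ℝ) * a / ε) * (Real.cos (2 * π * (c + ε * u)) - Real.cos (2 * π * c)))
      (-(2 * π * q * a) * Real.sin (2 * π * (c + ε * u))) u := by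
    intro u
    have hinner : HasDerivAt (fun u : ℝ => 2 * π * (c + ε * u)) (2 * π * ε) u := by
      simpa using (((hasDerivAt_id u).const_mul ε).const_add c).const_mul (2 * π)
    have h := (((hinner.cos).sub_const (Real.cos (2 * π * c))).const_mul ((q : ℝ) * a / ε)).const_add (x.2 0)
    refine h.congr_deriv ?_
    rw [div_mul_eq_mul_div, div_eq_iff hε]
    ring
  have h0 : (Φ 0 x).2 0 = x.2 0 + ((q : ℝ) * a / ε) * (Real.cos (2 * π * (c + ε * 0)) - Real.cos (2 * π * c)) := by
    rw [hΦ.1 x]; simp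
  exact eq_of_hasDerivAt_eq hf hF h0 t

include hH hΦ in
lemma flowR1 : ∀ (x : PS3) (t : ℝ), ((q' : ℝ) * α' - (p' : ℝ)) ≠ 0 → (Φ t x).2 1
    = x.2 1 + ((q' : ℝ) * b / ((q' : ℝ) * α' - (p' : ℝ))) *
      (Real.cos (2 * π * ((((q' : ℝ) * x.1 1 - (p' : ℝ) * x.1 2)) + ((q' : ℝ) * α' - (p' : ℝ)) * t))
        - Real.cos (2 * π * ((q' : ℝ) * x.1 1 - (p' : ℝ) * x.1 2))) := by
  intro x t hε
  set ε := (q' : ℝ) * α' - (p' : ℝ) with hεdef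
  set c := (q' : ℝ) * x.1 1 - (p' : ℝ) * x.1 2 with hcdef
  have hf : ∀ u : ℝ, HasDerivAt (fun s => (Φ s x).2 1)
      (-(2 * π * q' * b) * Real.sin (2 * π * (c + ε * u))) u := by
    intro u
    have h := hΦ.2.2 x u 1
    rw [keyT1 α α' p p' q q' a b H hH] at h
    have e1 : (Φ u x).1 1 = x.1 1 + u * α' := by
      have := flowTheta α α' p p' q q' a b H hH Φ hΦ x u 1; simpa using this
    have e2 : (Φ u x).1 2 = x.1 2 + u := by
      have := flowTheta α α' p p' q q' a b H hH Φ hΦ x u 2; simpa using this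
    rw [e1, e2] at h
    convert h using 1
    rw [show 2 * π * ((q' : ℝ) * (x.1 1 + u * α') - (p' : ℝ) * (x.1 2 + u)) = 2 * π * (c + ε * u) by
      rw [hcdef, hεdef]; ring]
    ring
  have hF : ∀ u : ℝ, HasDerivAt
      (fun u : ℝ => x.2 1 + ((q' : ℝ) * b / ε) * (Real.cos (2 * π * (c + ε * u)) - Real.cos (2 * π * c)))
      (-(2 * π * q' * b) * Real.sin (2 * π * (c + ε * u))) u := by
    intro u
    have hinner : HasDerivAt (fun u : ℝ => 2 * π * (c + ε * u)) (2 * π * ε) u := by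
      simpa using (((hasDerivAt_id u).const_mul ε).const_add c).const_mul (2 * π)
    have h := (((hinner.cos).sub_const (Real.cos (2 * π * c))).const_mul ((q' : ℝ) * b / ε)).const_add (x.2 1)
    refine h.congr_deriv ?_
    rw [div_mul_eq_mul_div, div_eq_iff hε]
    ring
  have h0 : (Φ 0 x).2 1 = x.2 1 + ((q' : ℝ) * b / ε) * (Real.cos (2 * π * (c + ε * 0)) - Real.cos (2 * π * c)) := by
    rw [hΦ.1 x]; simp
  exact eq_of_hasDerivAt_eq hf hF h0 t

end Helpers


theorem stretching_model_lemma (α α' : ℝ) (hα : Irrational α) (hα' : Irrational α')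
    (p p' : ℤ) (q q' : ℕ) (hq : 0 < q) (hq' : 0 < q')
    (a b : ℝ)
    (ha : 4 * |(q : ℝ) * α - (p : ℝ)| ≤ a ∧ a ≤ Real.exp (-(q : ℝ)))
    (hb : 4 * |(q' : ℝ) * α' - (p' : ℝ)| ≤ b ∧ b ≤ Real.exp (-(q' : ℝ)))
    (H : PS3 → ℝ)
    (hH : H = fun x : PS3 =>
      (∑ j, x.2 j * (![α, α', 1] : Fin 3 → ℝ) j)
        - a * Real.cos (2 * π * ((q : ℝ) * x.1 0 - (p : ℝ) * x.1 2))
        - b * Real.cos (2 * π * ((q' : ℝ) * x.1 1 - (p' : ℝ) * x.1 2)))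
    (Φ : ℝ → PS3 → PS3) (hΦ : IsHamFlow H Φ) :
    (∀ t ∈ Icc a⁻¹ (1 / (4 * |(q : ℝ) * α - (p : ℝ)|)),
      Stretching1 H Φ t (1 / (q : ℝ)) (2 * (q : ℝ))) ∧
    (∀ t ∈ Icc b⁻¹ (1 / (4 * |(q' : ℝ) * α' - (p' : ℝ)|)),
      Stretching2 H Φ t (1 / (q' : ℝ)) (2 * (q' : ℝ))) := by
  have hε1 : (q : ℝ) * α - (p : ℝ) ≠ 0 := by
    intro h
    have hqne : (q : ℝ) ≠ 0 := Nat.cast_ne_zero.mpr hq.ne'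
    exact hα ⟨(p : ℚ) / (q : ℚ), by push_cast; field_simp; linarith⟩
  have hε2 : (q' : ℝ) * α' - (p' : ℝ) ≠ 0 := by
    intro h
    have hqne : (q' : ℝ) ≠ 0 := Nat.cast_ne_zero.mpr hq'.ne'
    exact hα' ⟨(p' : ℚ) / (q' : ℚ), by push_cast; field_simp; linarith⟩
  constructor
  · intro t ht
    constructor
    · intro s₀ hnorm z hz
      have h1 := norm_le_pi_norm s₀.2 0
      rw [Real.norm_eq_abs] at h1
      have hr0 : |s₀.2 0| ≤ 2 * (q : ℝ) / 10 := by linarith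
      have hz' : |z| ≤ 2 * (q : ℝ) := abs_le.mpr ⟨hz.1, hz.2⟩
      obtain ⟨s, hs, heq⟩ := stretch_aux ((q : ℝ) * α - (p : ℝ)) a q hq hε1 ha.1 t ht (s₀.2 0)
        ((q : ℝ) * s₀.1 0 - (p : ℝ) * s₀.1 2) z hr0 hz'
      refine ⟨(![s₀.1 0 + s, s₀.1 1, s₀.1 2],
        ![s₀.2 0, s₀.2 1, H s₀ - s₀.2 0 * α - s₀.2 1 * α'
          + a * Real.cos (2 * π * ((q : ℝ) * (s₀.1 0 + s) - (p : ℝ) * s₀.1 2))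
          + b * Real.cos (2 * π * ((q' : ℝ) * s₀.1 1 - (p' : ℝ) * s₀.1 2))]), ?_, ?_⟩
      · refine ⟨⟨s, hs, by simp⟩, by simp, by simp, by simp, by simp, ?_⟩
        simp only [hH, Fin.sum_univ_three, Matrix.cons_val_zero, Matrix.cons_val_one,
          Matrix.head_cons, Matrix.cons_val_two, Matrix.tail_cons]
        ring
      · beta_reduce
        rw [flowR0 α α' p p' q q' a b H hH Φ hΦ _ t hε1]
        simp only [Matrix.cons_val_zero, Matrix.cons_val_two, Matrix.tail_cons, Matrix.head_cons]
        rw [show (q : ℝ) * (s₀.1 0 + s) - (p : ℝ) * s₀.1 2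
            = ((q : ℝ) * s₀.1 0 - (p : ℝ) * s₀.1 2) + (q : ℝ) * s by ring]
        exact heq
    · intro x y h0 h2 hr
      rw [flowR0 α α' p p' q q' a b H hH Φ hΦ x t hε1,
        flowR0 α α' p p' q q' a b H hH Φ hΦ y t hε1, h0, h2,
        show x.2 0 = y.2 0 from congrFun hr 0]
  · intro t ht
    constructor
    · intro s₀ hnorm z hz
      have h1 := norm_le_pi_norm s₀.2 1
      rw [Real.norm_eq_abs] at h1
      have hr0 : |s₀.2 1| ≤ 2 * (q' : ℝ) / 10 := by linarith
      have hz' : |z| ≤ 2 * (q' : ℝ) := abs_le.mpr ⟨hz.1, hz.2⟩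
      obtain ⟨s, hs, heq⟩ := stretch_aux ((q' : ℝ) * α' - (p' : ℝ)) b q' hq' hε2 hb.1 t ht (s₀.2 1)
        ((q' : ℝ) * s₀.1 1 - (p' : ℝ) * s₀.1 2) z hr0 hz'
      refine ⟨(![s₀.1 0, s₀.1 1 + s, s₀.1 2],
        ![s₀.2 0, s₀.2 1, H s₀ - s₀.2 0 * α - s₀.2 1 * α'
          + a * Real.cos (2 * π * ((q : ℝ) * s₀.1 0 - (p : ℝ) * s₀.1 2))
          + b * Real.cos (2 * π * ((q' : ℝ) * (s₀.1 1 + s) - (p' : ℝ) * s₀.1 2))]), ?_, ?_⟩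
      · refine ⟨by simp, ⟨s, hs, by simp⟩, by simp, by simp, by simp, ?_⟩
        simp only [hH, Fin.sum_univ_three, Matrix.cons_val_zero, Matrix.cons_val_one,
          Matrix.head_cons, Matrix.cons_val_two, Matrix.tail_cons]
        ring
      · beta_reduce
        rw [flowR1 α α' p p' q q' a b H hH Φ hΦ _ t hε2]
        simp only [Matrix.cons_val_zero, Matrix.cons_val_one, Matrix.head_cons,
          Matrix.cons_val_two, Matrix.tail_cons]
        rw [show (q' : ℝ) * (s₀.1 1 + s) - (p' : ℝ) * s₀.1 2
            = ((q' : ℝ) * s₀.1 1 - (p' : ℝ) * s₀.1 2) + (q' : ℝ) * s by ring]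
        exact heq
    · intro x y h0 h2 hr
      rw [flowR1 α α' p p' q q' a b H hH Φ hΦ x t hε2,
        flowR1 α α' p p' q q' a b H hH Φ hΦ y t hε2, h0, h2,
        show x.2 1 = y.2 1 from congrFun hr 1]
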